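/- Let Φ:[0,∞)→ℝ be a continuous convex function with Φ(1)=0, and let P, Q be probability distributions on a finite set Ω with Q(ω)>0 for all ω. Then the Φ-divergence D_Φ(P‖Q) = Σ_ω Q(ω)Φ(P(ω)/Q(ω)) satisfies D_Φ(P‖Q) = sup over functions k:Ω→ℝ of ( Σ_ω P(ω)k(ω) − Σ_ω Q(ω)Φ*(k(ω)) ), where Φ*(b) = sup_{a≥0} (ab − Φ(a)) is the convex conjugate. -/
import Mathlib


open scoped BigOperators

/-- The set whose supremum defines the convex conjugate of `Φ` (with domain `[0,∞)`). -/
def conjSet (Φ : ℝ → ℝ) (b : ℝ) : Set ℝ := {y | ∃ a : ℝ, 0 ≤ a ∧ y = a * b - Φ a}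

/-- Convex conjugate `Φ*` of `Φ : [0,∞) → ℝ` (real supremum). -/
noncomputable def conj (Φ : ℝ → ℝ) (b : ℝ) : ℝ := sSup (conjSet Φ b)

/-- The (effective) domain of the conjugate `Φ*`: points where `Φ*` is finite. -/
def domStar (Φ : ℝ → ℝ) : Set ℝ := {b | BddAbove (conjSet Φ b)}

/-- Existence of a subgradient of a convex function on `[0,∞)` at an interior point. -/
lemma exists_subgradient (Φ : ℝ → ℝ) (hconv : ConvexOn ℝ (Set.Ici 0) Φ)
    {a : ℝ} (ha : 0 < a) : ∃ k : ℝ, ∀ t : ℝ, 0 ≤ t → Φ a + k * (t - a) ≤ Φ t := by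
  set g : ℝ → ℝ := fun s => (Φ s - Φ a) / (s - a) with hg
  have haI : a ∈ Set.Ici (0:ℝ) := le_of_lt ha
  set S : Set ℝ := g '' Set.Ico 0 a with hS
  have hSne : S.Nonempty := ⟨g 0, ⟨0, ⟨le_refl 0, ha⟩, rfl⟩⟩
  have hbd : ∀ y ∈ S, y ≤ g (a + 1) := by
    rintro y ⟨s, ⟨hs0, hsa⟩, rfl⟩
    exact hconv.secant_mono haI hs0 (by simp [haI]; linarith) (ne_of_lt hsa)
      (by linarith) (by linarith)
  have hSbdd : BddAbove S := ⟨g (a + 1), hbd⟩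
  refine ⟨sSup S, fun t ht => ?_⟩
  rcases lt_trichotomy t a with hlt | heq | hgt
  · have h1 : g t ≤ sSup S := le_csSup hSbdd ⟨t, ⟨ht, hlt⟩, rfl⟩
    have hta : t - a < 0 := by linarith
    rw [hg] at h1
    have := (div_le_iff_of_neg hta).mp h1
    linarith
  · subst heq; simp
  · have h2 : sSup S ≤ g t := by
      apply csSup_le hSne
      rintro y ⟨s, ⟨hs0, hsa⟩, rfl⟩
      exact hconv.secant_mono haI hs0 ht (ne_of_lt hsa) (ne_of_gt hgt) (by linarith)
    have hta : 0 < t - a := by linarith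
    rw [hg] at h2
    have := (le_div_iff₀ hta).mp h2
    linarith

/-- At a subgradient `k` of `Φ` at `a ≥ 0`, the conjugate is attained: `Φ*(k) = a*k - Φ a`. -/
lemma conj_at_subgradient (Φ : ℝ → ℝ) {a k : ℝ} (ha : 0 ≤ a)
    (hsub : ∀ t : ℝ, 0 ≤ t → Φ a + k * (t - a) ≤ Φ t) :
    k ∈ domStar Φ ∧ conj Φ k = a * k - Φ a := by
  have hub : ∀ y ∈ conjSet Φ k, y ≤ a * k - Φ a := by
    rintro y ⟨t, ht, rfl⟩
    have := hsub t ht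
    nlinarith
  have hmem : a * k - Φ a ∈ conjSet Φ k := ⟨a, ha, rfl⟩
  have hbdd : BddAbove (conjSet Φ k) := ⟨a * k - Φ a, hub⟩
  exact ⟨hbdd, le_antisymm (csSup_le ⟨_, hmem⟩ hub) (le_csSup hbdd hmem)⟩

/-- Near-optimal dual point: for every `a ≥ 0` and `ε > 0`, there is `k` in the domain of `Φ*`
with `Φ a - ε ≤ a*k - Φ*(k)`. -/
lemma exists_near_optimal (Φ : ℝ → ℝ) (hconv : ConvexOn ℝ (Set.Ici 0) Φ)
    (hcont : ContinuousOn Φ (Set.Ici 0)) (hΦ1 : Φ 1 = 0)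
    {a : ℝ} (ha : 0 ≤ a) {ε : ℝ} (hε : 0 < ε) :
    ∃ k : ℝ, k ∈ domStar Φ ∧ Φ a - ε ≤ a * k - conj Φ k := by
  rcases eq_or_lt_of_le ha with h0 | hpos
  · -- a = 0 : approximate with very negative k
    obtain ⟨k₁, hk₁⟩ := exists_subgradient Φ hconv one_pos
    have hk₁' : ∀ t : ℝ, 0 ≤ t → k₁ * (t - 1) ≤ Φ t := by
      intro t ht; have := hk₁ t ht; rw [hΦ1] at this; linarith
    -- continuity at 0 gives δ
    have hc0 : ContinuousWithinAt Φ (Set.Ici 0) 0 := hcont 0 Set.self_mem_Ici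
    rw [Metric.continuousWithinAt_iff] at hc0
    obtain ⟨δ, hδ0, hδ⟩ := hc0 ε hε
    set k : ℝ := min (min 0 k₁) (k₁ + (ε - Φ 0 - k₁) / δ) with hk
    have hk0 : k ≤ 0 := le_trans (min_le_left _ _) (min_le_left _ _)
    have hkk₁ : k ≤ k₁ := le_trans (min_le_left _ _) (min_le_right _ _)
    have hkδ : δ * (k - k₁) + k₁ ≤ ε - Φ 0 := by
      have h1 : k ≤ k₁ + (ε - Φ 0 - k₁) / δ := min_le_right _ _
      have h2 : δ * (k - k₁) ≤ δ * ((ε - Φ 0 - k₁) / δ) :=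
        mul_le_mul_of_nonneg_left (by linarith) hδ0.le
      rw [mul_div_cancel₀ _ (ne_of_gt hδ0)] at h2
      linarith
    have hub : ∀ y ∈ conjSet Φ k, y ≤ ε - Φ 0 := by
      rintro y ⟨t, ht, rfl⟩
      rcases lt_or_ge t δ with htδ | htδ
      · have hd : dist t 0 < δ := by
          rw [Real.dist_eq, sub_zero, abs_of_nonneg ht]; exact htδ
        have h3 : dist (Φ t) (Φ 0) < ε := hδ ht hd
        rw [Real.dist_eq] at h3
        have h4 : Φ 0 - Φ t ≤ |Φ t - Φ 0| := by rw [abs_sub_comm]; exact le_abs_self _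
        have h5 : t * k ≤ 0 := mul_nonpos_of_nonneg_of_nonpos ht hk0
        linarith
      · have h6 : k₁ * (t - 1) ≤ Φ t := hk₁' t ht
        have h7 : t * (k - k₁) ≤ δ * (k - k₁) :=
          mul_le_mul_of_nonpos_right htδ (by linarith)
        nlinarith
    have hbdd : BddAbove (conjSet Φ k) := ⟨ε - Φ 0, hub⟩
    have hne : (conjSet Φ k).Nonempty := ⟨1 * k - Φ 1, 1, zero_le_one, rfl⟩
    have hle : conj Φ k ≤ ε - Φ 0 := csSup_le hne hub
    refine ⟨k, hbdd, ?_⟩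
    rw [← h0]
    simp only [zero_mul, zero_sub]
    linarith
  · obtain ⟨k, hk⟩ := exists_subgradient Φ hconv hpos
    obtain ⟨hdom, hconj⟩ := conj_at_subgradient Φ ha hk
    exact ⟨k, hdom, by rw [hconj]; linarith⟩

/-- Variational representation of the Φ-divergence on a finite outcome space:
`D_Φ(P‖Q) = sup_k ( Σ P·k − Σ Q·Φ*(k) )` over `k` taking values in `dom(Φ*)`. -/
theorem variational_representation {Ω : Type*} [Fintype Ω]
    (Φ : ℝ → ℝ) (hconv : ConvexOn ℝ (Set.Ici 0) Φ)
    (hcont : ContinuousOn Φ (Set.Ici 0)) (hΦ1 : Φ 1 = 0)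
    (P Q : Ω → ℝ) (hP0 : ∀ ω, 0 ≤ P ω) (hP1 : ∑ ω, P ω = 1)
    (hQ0 : ∀ ω, 0 < Q ω) (hQ1 : ∑ ω, Q ω = 1) :
    IsLUB {u : ℝ | ∃ k : Ω → ℝ, (∀ ω, k ω ∈ domStar Φ) ∧
        u = ∑ ω, P ω * k ω - ∑ ω, Q ω * conj Φ (k ω)}
      (∑ ω, Q ω * Φ (P ω / Q ω)) := by
  constructor
  · -- upper bound
    rintro u ⟨k, hk, rfl⟩
    rw [← Finset.sum_sub_distrib]
    apply Finset.sum_le_sum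
    intro ω _
    set a := P ω / Q ω with haa
    have ha : 0 ≤ a := div_nonneg (hP0 ω) (hQ0 ω).le
    have hFY : a * k ω - Φ a ≤ conj Φ (k ω) := le_csSup (hk ω) ⟨a, ha, rfl⟩
    have hPa : P ω = Q ω * a := by
      rw [haa, mul_div_cancel₀ _ (ne_of_gt (hQ0 ω))]
    rw [hPa]
    nlinarith [(hQ0 ω).le, mul_le_mul_of_nonneg_left hFY (hQ0 ω).le]
  · -- least upper bound
    intro b hb
    refine le_of_forall_pos_le_add fun ε hε => ?_
    choose k hkdom hkle using fun ω =>
      exists_near_optimal Φ hconv hcont hΦ1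
        (div_nonneg (hP0 ω) (hQ0 ω).le) hε
    have hmem : (∑ ω, P ω * k ω - ∑ ω, Q ω * conj Φ (k ω)) ∈
        {u : ℝ | ∃ k : Ω → ℝ, (∀ ω, k ω ∈ domStar Φ) ∧
          u = ∑ ω, P ω * k ω - ∑ ω, Q ω * conj Φ (k ω)} := ⟨k, hkdom, rfl⟩
    have hub := hb hmem
    have key : ∑ ω, Q ω * Φ (P ω / Q ω) ≤
        (∑ ω, P ω * k ω - ∑ ω, Q ω * conj Φ (k ω)) + ε := by
      rw [← Finset.sum_sub_distrib]
      have : ∀ ω : Ω, Q ω * Φ (P ω / Q ω) ≤ P ω * k ω - Q ω * conj Φ (k ω) + Q ω * ε := by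
        intro ω
        have h1 := hkle ω
        have hPa : P ω = Q ω * (P ω / Q ω) := by
          rw [mul_div_cancel₀ _ (ne_of_gt (hQ0 ω))]
        have hPk : P ω * k ω = Q ω * (P ω / Q ω) * k ω := by rw [← hPa]
        nlinarith [mul_le_mul_of_nonneg_left h1 (hQ0 ω).le, hPk]
      calc ∑ ω, Q ω * Φ (P ω / Q ω)
          ≤ ∑ ω, (P ω * k ω - Q ω * conj Φ (k ω) + Q ω * ε) :=
            Finset.sum_le_sum fun ω _ => this ω
        _ = ∑ ω, (P ω * k ω - Q ω * conj Φ (k ω)) + (∑ ω, Q ω) * ε := by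
            rw [Finset.sum_add_distrib, Finset.sum_mul]
        _ = ∑ ω, (P ω * k ω - Q ω * conj Φ (k ω)) + ε := by rw [hQ1, one_mul]
    linarith
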